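/- For each fixed integer r ≥ 6, the function η_r(d) = (1 - e^{-d}) / (1 - ((r-1)d+1)^{-1/(r-1)}) is weakly increasing on the interval 1/(r-1) ≤ d ≤ 2. -/

import Mathlib

open Real

set_option maxHeartbeats 1000000

lemma exp_ub3 {x : ℝ} (h0 : 0 ≤ x) (h1 : x ≤ 1) :
    Real.exp x ≤ 1 + x + x^2/2 + 2/9*x^3 := by
  have hb := Real.exp_bound (x := x) (by rw [abs_of_nonneg h0]; exact h1) (n := 3) (by norm_num)
  have hs : ∑ m ∈ Finset.range 3, x ^ m / (m.factorial : ℝ) = 1 + x + x^2/2 := by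
    simp [Finset.sum_range_succ]
  rw [hs, abs_of_nonneg h0] at hb
  have := abs_le.1 hb
  have h2 : ((3:ℕ).succ / ((3:ℕ).factorial * (3:ℕ)) : ℝ) = 2/9 := by
    norm_num [Nat.factorial]
  nlinarith [this.2]

lemma exp_lb2 {x : ℝ} (h0 : 0 ≤ x) : 1 + x + x^2/2 ≤ Real.exp x := by
  have h := Real.sum_le_exp_of_nonneg h0 3
  have hs : ∑ m ∈ Finset.range 3, x ^ m / (m.factorial : ℝ) = 1 + x + x^2/2 := by
    simp [Finset.sum_range_succ]
  linarith [hs ▸ h]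

lemma exp_ub_two {x : ℝ} (h0 : 0 ≤ x) (h2 : x ≤ 2) :
    Real.exp x ≤ 1 + x + 1429/1296*x^2 := by
  have hu0 : 0 ≤ x/2 := by linarith
  have hu1 : x/2 ≤ 1 := by linarith
  have h := exp_ub3 hu0 hu1
  have hcube : (x/2)^3 ≤ (x/2)^2 := by
    nlinarith [sq_nonneg (x/2)]
  have hub : Real.exp (x/2) ≤ 1 + x/2 + (13/18)*(x/2)^2 := by linarith
  have hsq : Real.exp x = Real.exp (x/2) * Real.exp (x/2) := by
    rw [← Real.exp_add]; ring_nf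
  have hpos : (0:ℝ) < Real.exp (x/2) := Real.exp_pos _
  rw [hsq]
  have hnn : (0:ℝ) ≤ 1 + x/2 + (13/18)*(x/2)^2 := by positivity
  have hmul : Real.exp (x/2) * Real.exp (x/2) ≤ (1 + x/2 + (13/18)*(x/2)^2) * (1 + x/2 + (13/18)*(x/2)^2) :=
    mul_le_mul hub hub hpos.le hnn
  nlinarith [hcube, sq_nonneg (x/2), mul_nonneg (mul_nonneg hu0 hu0) (mul_nonneg hu0 hu0)]

lemma exp_chord2 {x : ℝ} (h0 : 0 ≤ x) (h2 : x ≤ 2) :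
    Real.exp x ≤ 1 + 3.19452805 * x := by
  have hc := convexOn_exp.2 (Set.mem_univ (0:ℝ)) (Set.mem_univ (2:ℝ))
    (show (0:ℝ) ≤ 1 - x/2 by linarith) (show (0:ℝ) ≤ x/2 by linarith)
    (show (1 - x/2) + x/2 = 1 by ring)
  simp only [smul_eq_mul] at hc
  have hx : (1 - x/2) * 0 + x/2 * 2 = x := by ring
  rw [hx] at hc
  have he2 : Real.exp 2 ≤ 7.3890561 := by
    have h1 := Real.exp_one_lt_d9
    have h22 : Real.exp 2 = Real.exp 1 * Real.exp 1 := by rw [← Real.exp_add]; norm_num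
    nlinarith [Real.exp_pos 1]
  rw [Real.exp_zero] at hc
  nlinarith

lemma log_three_lb : (1.0984 : ℝ) ≤ Real.log 3 := by
  rw [Real.le_log_iff_exp_le (by norm_num)]
  have h3 : Real.exp (1.0984 : ℝ) = Real.exp 1 * Real.exp 0.0984 := by
    rw [← Real.exp_add]; norm_num
  rw [h3]
  have h1 := Real.exp_one_lt_d9
  have h2 : Real.exp (0.0984:ℝ) ≤ 1 + 0.0984 + 0.0984^2/2 + 2/9*0.0984^3 :=
    exp_ub3 (by norm_num) (by norm_num)
  nlinarith [Real.exp_pos (0.0984:ℝ), Real.exp_pos 1]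

lemma log_chord {a b z : ℝ} (h0 : 0 < a) (hab : a < b) (h1 : a ≤ z) (h2 : z ≤ b) :
    ((b - z) * Real.log a + (z - a) * Real.log b) / (b - a) ≤ Real.log z := by
  have hba : 0 < b - a := by linarith
  have hc := (strictConcaveOn_log_Ioi.concaveOn).2 (Set.mem_Ioi.mpr h0)
    (Set.mem_Ioi.mpr (by linarith : (0:ℝ) < b))
    (show (0:ℝ) ≤ (b - z)/(b-a) by apply div_nonneg (by linarith) (by linarith))
    (show (0:ℝ) ≤ (z - a)/(b-a) by apply div_nonneg (by linarith) (by linarith))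
    (show (b - z)/(b-a) + (z - a)/(b-a) = 1 by field_simp; ring)
  simp only [smul_eq_mul] at hc
  have hx : (b - z)/(b-a) * a + (z - a)/(b-a) * b = z := by field_simp; ring
  rw [hx] at hc
  have : ((b - z) * Real.log a + (z - a) * Real.log b) / (b - a)
      = (b - z)/(b-a) * Real.log a + (z - a)/(b-a) * Real.log b := by ring
  linarith [this ▸ hc]

section logs
example : True := trivial

lemma hlog4 : (1.3862943606:ℝ) ≤ Real.log 4 := by
  rw [show (4:ℝ) = 2^2 by norm_num, Real.log_pow]
  push_cast
  nlinarith [Real.log_two_gt_d9]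

lemma hlog8 : (2.0794415409:ℝ) ≤ Real.log 8 := by
  rw [show (8:ℝ) = 2^3 by norm_num, Real.log_pow]
  push_cast
  nlinarith [Real.log_two_gt_d9]

lemma hlog16 : (2.7725887212:ℝ) ≤ Real.log 16 := by
  rw [show (16:ℝ) = 2^4 by norm_num, Real.log_pow]
  push_cast
  nlinarith [Real.log_two_gt_d9]

lemma hlog32 : (3.4657359015:ℝ) ≤ Real.log 32 := by
  rw [show (32:ℝ) = 2^5 by norm_num, Real.log_pow]
  push_cast
  nlinarith [Real.log_two_gt_d9]

lemma hlog12 : (2.4846943606:ℝ) ≤ Real.log 12 := by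
  rw [show (12:ℝ) = 2^2*3 by norm_num, Real.log_mul (by norm_num) (by norm_num), Real.log_pow]
  push_cast
  nlinarith [Real.log_two_gt_d9, log_three_lb]

lemma hlog24 : (3.1778415409:ℝ) ≤ Real.log 24 := by
  rw [show (24:ℝ) = 2^3*3 by norm_num, Real.log_mul (by norm_num) (by norm_num), Real.log_pow]
  push_cast
  nlinarith [Real.log_two_gt_d9, log_three_lb]

end logs

lemma keycase1 (s z L : ℝ) (hs : 5 ≤ s) (h2s : z ≤ 2*s) (ha : (1:ℝ) ≤ z) (hb : z ≤ 3)
    (hL : ((4-(z+1))*0.6931471803 + ((z+1)-2)*1.3862943606)/2 ≤ L) :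
    z*s + 1429/1296*z^2 ≤ (z+1)*(L*s + L^2/2) := by
  set l : ℝ := ((4-(z+1))*0.6931471803 + ((z+1)-2)*1.3862943606)/2 with hl
  have hza : (0:ℝ) ≤ z - 1 := by linarith
  have hzb : (0:ℝ) ≤ 3 - z := by linarith
  have hl0 : (0:ℝ) ≤ l := by rw [hl]; nlinarith
  have hA : (0:ℝ) ≤ (z+1)*l - z := by rw [hl]; nlinarith [mul_nonneg hza hzb]
  have hLl : (0:ℝ) ≤ L - l := by linarith
  nlinarith [mul_nonneg (mul_nonneg hLl (by linarith : (0:ℝ) ≤ s)) (by linarith : (0:ℝ) ≤ z+1),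
    mul_nonneg (mul_nonneg hLl (by linarith : (0:ℝ) ≤ L + l)) (by linarith : (0:ℝ) ≤ z+1),
    mul_nonneg (by linarith : (0:ℝ) ≤ s-5) hA,
    mul_nonneg (by linarith : (0:ℝ) ≤ 2*s - z) hA,
    mul_nonneg hza hzb,
    mul_nonneg (mul_nonneg hza hzb) hza,
    mul_nonneg (mul_nonneg hza hzb) hzb]


lemma keycase2 (s z L : ℝ) (hs : 5 ≤ s) (h2s : z ≤ 2*s) (ha : (3:ℝ) ≤ z) (hb : z ≤ 7)
    (hL : ((8-(z+1))*1.3862943606 + ((z+1)-4)*2.0794415409)/4 ≤ L) :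
    z*s + 1429/1296*z^2 ≤ (z+1)*(L*s + L^2/2) := by
  set l : ℝ := ((8-(z+1))*1.3862943606 + ((z+1)-4)*2.0794415409)/4 with hl
  have hza : (0:ℝ) ≤ z - 3 := by linarith
  have hzb : (0:ℝ) ≤ 7 - z := by linarith
  have hl0 : (0:ℝ) ≤ l := by rw [hl]; nlinarith
  have hA : (0:ℝ) ≤ (z+1)*l - z := by rw [hl]; nlinarith [mul_nonneg hza hzb]
  have hLl : (0:ℝ) ≤ L - l := by linarith
  nlinarith [mul_nonneg (mul_nonneg hLl (by linarith : (0:ℝ) ≤ s)) (by linarith : (0:ℝ) ≤ z+1),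
    mul_nonneg (mul_nonneg hLl (by linarith : (0:ℝ) ≤ L + l)) (by linarith : (0:ℝ) ≤ z+1),
    mul_nonneg (by linarith : (0:ℝ) ≤ s-5) hA,
    mul_nonneg (by linarith : (0:ℝ) ≤ 2*s - z) hA,
    mul_nonneg hza hzb,
    mul_nonneg (mul_nonneg hza hzb) hza,
    mul_nonneg (mul_nonneg hza hzb) hzb]


lemma keycase3 (s z L : ℝ) (hs : 5 ≤ s) (h2s : z ≤ 2*s) (ha : (7:ℝ) ≤ z) (hb : z ≤ 11)
    (hL : ((12-(z+1))*2.0794415409 + ((z+1)-8)*2.4846943606)/4 ≤ L) :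
    z*s + 1429/1296*z^2 ≤ (z+1)*(L*s + L^2/2) := by
  set l : ℝ := ((12-(z+1))*2.0794415409 + ((z+1)-8)*2.4846943606)/4 with hl
  have hza : (0:ℝ) ≤ z - 7 := by linarith
  have hzb : (0:ℝ) ≤ 11 - z := by linarith
  have hl0 : (0:ℝ) ≤ l := by rw [hl]; nlinarith
  have hA : (0:ℝ) ≤ (z+1)*l - z := by rw [hl]; nlinarith [mul_nonneg hza hzb]
  have hLl : (0:ℝ) ≤ L - l := by linarith
  nlinarith [mul_nonneg (mul_nonneg hLl (by linarith : (0:ℝ) ≤ s)) (by linarith : (0:ℝ) ≤ z+1),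
    mul_nonneg (mul_nonneg hLl (by linarith : (0:ℝ) ≤ L + l)) (by linarith : (0:ℝ) ≤ z+1),
    mul_nonneg (by linarith : (0:ℝ) ≤ s-5) hA,
    mul_nonneg (by linarith : (0:ℝ) ≤ 2*s - z) hA,
    mul_nonneg hza hzb,
    mul_nonneg (mul_nonneg hza hzb) hza,
    mul_nonneg (mul_nonneg hza hzb) hzb]


lemma keycase4 (s z L : ℝ) (hs : 5 ≤ s) (h2s : z ≤ 2*s) (ha : (11:ℝ) ≤ z) (hb : z ≤ 15)
    (hL : ((16-(z+1))*2.4846943606 + ((z+1)-12)*2.7725887212)/4 ≤ L) :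
    z*s + 1429/1296*z^2 ≤ (z+1)*(L*s + L^2/2) := by
  set l : ℝ := ((16-(z+1))*2.4846943606 + ((z+1)-12)*2.7725887212)/4 with hl
  have hza : (0:ℝ) ≤ z - 11 := by linarith
  have hzb : (0:ℝ) ≤ 15 - z := by linarith
  have hl0 : (0:ℝ) ≤ l := by rw [hl]; nlinarith
  have hA : (0:ℝ) ≤ (z+1)*l - z := by rw [hl]; nlinarith [mul_nonneg hza hzb]
  have hLl : (0:ℝ) ≤ L - l := by linarith
  nlinarith [mul_nonneg (mul_nonneg hLl (by linarith : (0:ℝ) ≤ s)) (by linarith : (0:ℝ) ≤ z+1),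
    mul_nonneg (mul_nonneg hLl (by linarith : (0:ℝ) ≤ L + l)) (by linarith : (0:ℝ) ≤ z+1),
    mul_nonneg (by linarith : (0:ℝ) ≤ s-5) hA,
    mul_nonneg (by linarith : (0:ℝ) ≤ 2*s - z) hA,
    mul_nonneg hza hzb,
    mul_nonneg (mul_nonneg hza hzb) hza,
    mul_nonneg (mul_nonneg hza hzb) hzb]


lemma keycase5 (s z L : ℝ) (hs : 5 ≤ s) (h2s : z ≤ 2*s) (ha : (15:ℝ) ≤ z) (hb : z ≤ 23)
    (hL : ((24-(z+1))*2.7725887212 + ((z+1)-16)*3.1778415409)/8 ≤ L) :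
    z*s + 1429/1296*z^2 ≤ (z+1)*(L*s + L^2/2) := by
  set l : ℝ := ((24-(z+1))*2.7725887212 + ((z+1)-16)*3.1778415409)/8 with hl
  have hza : (0:ℝ) ≤ z - 15 := by linarith
  have hzb : (0:ℝ) ≤ 23 - z := by linarith
  have hl0 : (0:ℝ) ≤ l := by rw [hl]; nlinarith
  have hA : (0:ℝ) ≤ (z+1)*l - z := by rw [hl]; nlinarith [mul_nonneg hza hzb]
  have hLl : (0:ℝ) ≤ L - l := by linarith
  nlinarith [mul_nonneg (mul_nonneg hLl (by linarith : (0:ℝ) ≤ s)) (by linarith : (0:ℝ) ≤ z+1),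
    mul_nonneg (mul_nonneg hLl (by linarith : (0:ℝ) ≤ L + l)) (by linarith : (0:ℝ) ≤ z+1),
    mul_nonneg (by linarith : (0:ℝ) ≤ s-5) hA,
    mul_nonneg (by linarith : (0:ℝ) ≤ 2*s - z) hA,
    mul_nonneg hza hzb,
    mul_nonneg (mul_nonneg hza hzb) hza,
    mul_nonneg (mul_nonneg hza hzb) hzb]


lemma keycase6 (s z L : ℝ) (hs : 5 ≤ s) (h2s : z ≤ 2*s) (ha : (23:ℝ) ≤ z) (hb : z ≤ 31)
    (hL : ((32-(z+1))*3.1778415409 + ((z+1)-24)*3.4657359015)/8 ≤ L) :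
    z*s + 1429/1296*z^2 ≤ (z+1)*(L*s + L^2/2) := by
  set l : ℝ := ((32-(z+1))*3.1778415409 + ((z+1)-24)*3.4657359015)/8 with hl
  have hza : (0:ℝ) ≤ z - 23 := by linarith
  have hzb : (0:ℝ) ≤ 31 - z := by linarith
  have hl0 : (0:ℝ) ≤ l := by rw [hl]; nlinarith
  have hA : (0:ℝ) ≤ (z+1)*l - z := by rw [hl]; nlinarith [mul_nonneg hza hzb]
  have hLl : (0:ℝ) ≤ L - l := by linarith
  nlinarith [mul_nonneg (mul_nonneg hLl (by linarith : (0:ℝ) ≤ s)) (by linarith : (0:ℝ) ≤ z+1),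
    mul_nonneg (mul_nonneg hLl (by linarith : (0:ℝ) ≤ L + l)) (by linarith : (0:ℝ) ≤ z+1),
    mul_nonneg (by linarith : (0:ℝ) ≤ s-5) hA,
    mul_nonneg (by linarith : (0:ℝ) ≤ 2*s - z) hA,
    mul_nonneg hza hzb,
    mul_nonneg (mul_nonneg hza hzb) hza,
    mul_nonneg (mul_nonneg hza hzb) hzb]

lemma core {s z : ℝ} (hs : 5 ≤ s) (hz1 : 1 ≤ z) (hz2 : z ≤ 2*s) :
    z + Real.exp (z / s) ≤ (z + 1) * Real.exp (Real.log (z + 1) / s) := by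
  have hs0 : (0:ℝ) < s := by linarith
  set L := Real.log (z+1) with hLdef
  have hL0 : 0 < L := Real.log_pos (by linarith)
  have hzs0 : 0 ≤ z/s := by positivity
  have hzs2 : z/s ≤ 2 := by rw [div_le_iff₀ hs0]; linarith
  rcases le_or_gt 31 z with h31 | h31
  · have hexpL : 1 + L/s ≤ Real.exp (L/s) := by
      have := Real.add_one_le_exp (L/s); linarith
    have hexpz : Real.exp (z/s) ≤ 1 + 3.19452805*(z/s) := exp_chord2 hzs0 hzs2
    have hL32 : (3.4657359015:ℝ) ≤ L := by
      have hm : Real.log 32 ≤ L := by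
        apply Real.log_le_log (by norm_num)
        linarith
      linarith [hlog32]
    have key : 3.19452805*z ≤ (z+1)*L := by nlinarith
    have hd : 3.19452805*(z/s) ≤ (z+1)*(L/s) := by
      have h : (3.19452805*z)/s ≤ ((z+1)*L)/s := by gcongr
      calc 3.19452805*(z/s) = (3.19452805*z)/s := by ring
        _ ≤ ((z+1)*L)/s := h
        _ = (z+1)*(L/s) := by ring
    have hmul : (z+1)*(1+L/s) ≤ (z+1)*Real.exp (L/s) :=
      mul_le_mul_of_nonneg_left hexpL (by linarith)
    nlinarith
  · have hexpL : 1 + L/s + (L/s)^2/2 ≤ Real.exp (L/s) := exp_lb2 (by positivity)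
    have hexpz : Real.exp (z/s) ≤ 1 + z/s + 1429/1296*(z/s)^2 := exp_ub_two hzs0 hzs2
    have key : z*s + 1429/1296*z^2 ≤ (z+1)*(L*s + L^2/2) := by
      rcases le_or_gt z 3 with hc | hc
      · refine keycase1 s z L hs hz2 hz1 hc ?_
        have hch := log_chord (show (0:ℝ) < 2 by norm_num) (show (2:ℝ) < 4 by norm_num)
          (show (2:ℝ) ≤ z+1 by linarith) (show z+1 ≤ 4 by linarith)
        have c1 : (0:ℝ) ≤ 4 - (z+1) := by linarith
        have c2 : (0:ℝ) ≤ (z+1) - 2 := by linarith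
        linarith [mul_le_mul_of_nonneg_left Real.log_two_gt_d9.le c1,
          mul_le_mul_of_nonneg_left hlog4 c2, hch]
      rcases le_or_gt z 7 with hc2 | hc2
      · refine keycase2 s z L hs hz2 hc.le hc2 ?_
        have hch := log_chord (show (0:ℝ) < 4 by norm_num) (show (4:ℝ) < 8 by norm_num)
          (show (4:ℝ) ≤ z+1 by linarith) (show z+1 ≤ 8 by linarith)
        have c1 : (0:ℝ) ≤ 8 - (z+1) := by linarith
        have c2 : (0:ℝ) ≤ (z+1) - 4 := by linarith
        linarith [mul_le_mul_of_nonneg_left hlog4 c1,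
          mul_le_mul_of_nonneg_left hlog8 c2, hch]
      rcases le_or_gt z 11 with hc3 | hc3
      · refine keycase3 s z L hs hz2 hc2.le hc3 ?_
        have hch := log_chord (show (0:ℝ) < 8 by norm_num) (show (8:ℝ) < 12 by norm_num)
          (show (8:ℝ) ≤ z+1 by linarith) (show z+1 ≤ 12 by linarith)
        have c1 : (0:ℝ) ≤ 12 - (z+1) := by linarith
        have c2 : (0:ℝ) ≤ (z+1) - 8 := by linarith
        linarith [mul_le_mul_of_nonneg_left hlog8 c1,
          mul_le_mul_of_nonneg_left hlog12 c2, hch]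
      rcases le_or_gt z 15 with hc4 | hc4
      · refine keycase4 s z L hs hz2 hc3.le hc4 ?_
        have hch := log_chord (show (0:ℝ) < 12 by norm_num) (show (12:ℝ) < 16 by norm_num)
          (show (12:ℝ) ≤ z+1 by linarith) (show z+1 ≤ 16 by linarith)
        have c1 : (0:ℝ) ≤ 16 - (z+1) := by linarith
        have c2 : (0:ℝ) ≤ (z+1) - 12 := by linarith
        linarith [mul_le_mul_of_nonneg_left hlog12 c1,
          mul_le_mul_of_nonneg_left hlog16 c2, hch]
      rcases le_or_gt z 23 with hc5 | hc5
      · refine keycase5 s z L hs hz2 hc4.le hc5 ?_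
        have hch := log_chord (show (0:ℝ) < 16 by norm_num) (show (16:ℝ) < 24 by norm_num)
          (show (16:ℝ) ≤ z+1 by linarith) (show z+1 ≤ 24 by linarith)
        have c1 : (0:ℝ) ≤ 24 - (z+1) := by linarith
        have c2 : (0:ℝ) ≤ (z+1) - 16 := by linarith
        linarith [mul_le_mul_of_nonneg_left hlog16 c1,
          mul_le_mul_of_nonneg_left hlog24 c2, hch]
      · refine keycase6 s z L hs hz2 hc5.le h31.le ?_
        have hch := log_chord (show (0:ℝ) < 24 by norm_num) (show (24:ℝ) < 32 by norm_num)
          (show (24:ℝ) ≤ z+1 by linarith) (show z+1 ≤ 32 by linarith)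
        have c1 : (0:ℝ) ≤ 32 - (z+1) := by linarith
        have c2 : (0:ℝ) ≤ (z+1) - 24 := by linarith
        linarith [mul_le_mul_of_nonneg_left hlog24 c1,
          mul_le_mul_of_nonneg_left hlog32 c2, hch]
    have hs2 : (0:ℝ) < s^2 := by positivity
    have hdiv : z/s + 1429/1296*(z/s)^2 ≤ (z+1)*(L/s + (L/s)^2/2) := by
      have e1 : z/s + 1429/1296*(z/s)^2 = (z*s + 1429/1296*z^2)/s^2 := by
        field_simp
      have e2 : (z+1)*(L/s + (L/s)^2/2) = ((z+1)*(L*s + L^2/2))/s^2 := by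
        field_simp
      rw [e1, e2]
      gcongr
    have hmul : (z+1)*(1 + L/s + (L/s)^2/2) ≤ (z+1)*Real.exp (L/s) :=
      mul_le_mul_of_nonneg_left hexpL (by linarith)
    nlinarith

/-- For each fixed `r ≥ 6`, `η_r(d) = (1 - e^{-d})/(1 - ((r-1)d+1)^{-1/(r-1)})` is
weakly increasing on `[1/(r-1), 2]`. -/
theorem stmt15 (r : ℕ) (hr : 6 ≤ r) (d1 d2 : ℝ)
    (h1 : 1 / ((r : ℝ) - 1) ≤ d1) (h12 : d1 ≤ d2) (h2 : d2 ≤ 2) :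
    (1 - Real.exp (-d1)) /
        (1 - (((r : ℝ) - 1) * d1 + 1) ^ (-(1 : ℝ) / ((r : ℝ) - 1))) ≤
      (1 - Real.exp (-d2)) /
        (1 - (((r : ℝ) - 1) * d2 + 1) ^ (-(1 : ℝ) / ((r : ℝ) - 1))) := by
  have hr6 : (6:ℝ) ≤ (r:ℝ) := by exact_mod_cast hr
  set s : ℝ := (r:ℝ) - 1 with hsdef
  have hs5 : (5:ℝ) ≤ s := by rw [hsdef]; linarith
  have hs0 : (0:ℝ) < s := by linarith
  set g : ℝ → ℝ := fun x =>
    Real.log (1 - Real.exp (-x)) - Real.log (1 - Real.exp (Real.log (s*x+1) * (-1/s))) with hg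
  -- basic facts
  have hfacts : ∀ d : ℝ, 0 < d →
      Real.exp (-d) < 1 ∧ Real.exp (Real.log (s*d+1) * (-1/s)) < 1 ∧ (1:ℝ) < s*d+1 := by
    intro d hd
    have hb : (1:ℝ) < s*d+1 := by nlinarith
    refine ⟨?_, ?_, hb⟩
    · exact Real.exp_lt_one_iff.mpr (by linarith)
    · apply Real.exp_lt_one_iff.mpr
      apply mul_neg_of_pos_of_neg (Real.log_pos hb)
      rw [neg_div]
      have : (0:ℝ) < 1/s := by positivity
      linarith
  -- derivative
  have hasD : ∀ d : ℝ, 0 < d → HasDerivAt g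
      (-(Real.exp (-d) * -1) / (1 - Real.exp (-d)) -
        -(Real.exp (Real.log (s*d+1) * (-1/s)) * (s * 1 / (s*d+1) * (-1/s))) /
          (1 - Real.exp (Real.log (s*d+1) * (-1/s)))) d := by
    intro d hd
    obtain ⟨hE1, hP1, hb⟩ := hfacts d hd
    have hne1 : 1 - Real.exp (-d) ≠ 0 := by
      have := Real.exp_pos (-d); linarith
    have hne2 : 1 - Real.exp (Real.log (s*d+1) * (-1/s)) ≠ 0 := by
      have := Real.exp_pos (Real.log (s*d+1) * (-1/s)); linarith
    have hbne : s*d+1 ≠ 0 := by linarith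
    have f4 : HasDerivAt (fun x : ℝ => Real.log (1 - Real.exp (-x)))
        (-(Real.exp (-d) * -1) / (1 - Real.exp (-d))) d :=
      (((hasDerivAt_id d).neg.exp).const_sub 1).log hne1
    have g6 : HasDerivAt (fun x : ℝ => Real.log (1 - Real.exp (Real.log (s*x+1) * (-1/s))))
        (-(Real.exp (Real.log (s*d+1) * (-1/s)) * (s * 1 / (s*d+1) * (-1/s))) /
          (1 - Real.exp (Real.log (s*d+1) * (-1/s)))) d := by
      have g1 : HasDerivAt (fun x : ℝ => s*x+1) (s*1) d :=
        ((hasDerivAt_id d).const_mul s).add_const 1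
      exact (((g1.log hbne).mul_const (-1/s)).exp.const_sub 1).log hne2
    exact f4.sub g6
  -- monotone
  have hmono : MonotoneOn g (Set.Icc (1/s) 2) := by
    have hsinv : (0:ℝ) < 1/s := by positivity
    apply monotoneOn_of_deriv_nonneg (convex_Icc _ _)
    · intro d hd
      exact ((hasD d (lt_of_lt_of_le hsinv hd.1)).continuousAt).continuousWithinAt
    · intro d hd
      rw [interior_Icc] at hd
      exact ((hasD d (lt_trans hsinv hd.1)).differentiableAt).differentiableWithinAt
    · intro d hd
      rw [interior_Icc] at hd
      have hd0 : 0 < d := lt_trans hsinv hd.1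
      rw [(hasD d hd0).deriv]
      obtain ⟨hE1, hP1, hb⟩ := hfacts d hd0
      set E := Real.exp (-d) with hEdef
      set P := Real.exp (Real.log (s*d+1) * (-1/s)) with hPdef
      have hE0 : 0 < E := Real.exp_pos _
      have hP0 : 0 < P := Real.exp_pos _
      have h1E : 0 < 1 - E := by linarith
      have h1P : 0 < 1 - P := by linarith
      have hq : (0:ℝ) < s*d+1 := by linarith
      -- core inequality with z = s*d
      have hz1 : (1:ℝ) ≤ s*d := by
        have := hd.1
        rw [div_lt_iff₀ hs0] at this
        linarith
      have hz2 : s*d ≤ 2*s := by nlinarith [hd.2]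
      have hcore := core hs5 hz1 hz2
      rw [show s*d/s = d by field_simp] at hcore
      set D := Real.exp d with hDdef
      set A := Real.exp (Real.log (s*d+1) / s) with hAdef
      have hED : E * D = 1 := by
        rw [hEdef, hDdef, ← Real.exp_add]; simp
      have hPA : P * A = 1 := by
        rw [hPdef, hAdef, ← Real.exp_add]
        rw [show Real.log (s*d+1) * (-1/s) + Real.log (s*d+1)/s = 0 by field_simp; ring]
        exact Real.exp_zero
      have hcore' : s*d + D ≤ (s*d+1) * A := by
        rw [show s*d+1 = s*d+1 from rfl]
        convert hcore using 2 <;> ring_nf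
      have h5 := mul_le_mul_of_nonneg_left hcore' (mul_pos hE0 hP0).le
      have h6 : E*P*(s*d) + P ≤ E*(s*d+1) := by
        have e1 : E*P*(s*d + D) = E*P*(s*d) + (E*D)*P := by ring
        have e2 : E*P*((s*d+1)*A) = (P*A)*(E*(s*d+1)) := by ring
        rw [e1, hED, e2, hPA] at h5
        linarith
      have hmain : P * (1 - E) ≤ E * ((s*d+1) * (1 - P)) := by nlinarith [h6]
      have heq : -(E * -1) / (1 - E) - -(P * (s * 1 / (s*d+1) * (-1/s))) / (1 - P)
          = E/(1-E) - (P/((s*d+1)*(1-P))) := by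
        field_simp
      rw [heq, sub_nonneg]
      rw [div_le_div_iff₀ (by positivity) h1E]
      linarith [hmain]
  -- apply monotonicity
  have hsinv : (0:ℝ) < 1/s := by positivity
  have hd10 : 0 < d1 := lt_of_lt_of_le hsinv h1
  have hd20 : 0 < d2 := lt_of_lt_of_le hd10 h12
  have hgle := hmono ⟨h1, le_trans h12 h2⟩ ⟨le_trans h1 h12, h2⟩ h12
  simp only [hg] at hgle
  obtain ⟨hE1a, hP1a, hba⟩ := hfacts d1 hd10
  obtain ⟨hE1b, hP1b, hbb⟩ := hfacts d2 hd20
  have hrw1 : (s * d1 + 1) ^ (-(1:ℝ)/s) = Real.exp (Real.log (s*d1+1) * (-1/s)) := by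
    rw [Real.rpow_def_of_pos (by linarith : (0:ℝ) < s*d1+1)]
  have hrw2 : (s * d2 + 1) ^ (-(1:ℝ)/s) = Real.exp (Real.log (s*d2+1) * (-1/s)) := by
    rw [Real.rpow_def_of_pos (by linarith : (0:ℝ) < s*d2+1)]
  rw [hrw1, hrw2]
  have hn1 : 0 < 1 - Real.exp (-d1) := by linarith
  have hn2 : 0 < 1 - Real.exp (-d2) := by linarith
  have hq1 : 0 < 1 - Real.exp (Real.log (s*d1+1) * (-1/s)) := by linarith
  have hq2 : 0 < 1 - Real.exp (Real.log (s*d2+1) * (-1/s)) := by linarith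
  rw [div_le_div_iff₀ hq1 hq2]
  have l1 : Real.log ((1 - Real.exp (-d1)) * (1 - Real.exp (Real.log (s*d2+1) * (-1/s))))
      ≤ Real.log ((1 - Real.exp (-d2)) * (1 - Real.exp (Real.log (s*d1+1) * (-1/s)))) := by
    rw [Real.log_mul (ne_of_gt hn1) (ne_of_gt hq2), Real.log_mul (ne_of_gt hn2) (ne_of_gt hq1)]
    linarith [hgle]
  exact (Real.log_le_log_iff (by positivity) (by positivity)).mp l1
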